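/- Let n be an even integer. For every integer i with 6 ≤ i ≤ n/2, one has (i−3)·C(n,i) / C(n, ⌊i/2⌋) > n(n−1)/(n+2). -/

import Mathlib

lemma choose_mono_half (n : ℕ) {a b : ℕ} (hab : a ≤ b) (hb : b ≤ n / 2) :
    n.choose a ≤ n.choose b := by
  induction b, hab using Nat.le_induction with
  | base => exact le_rfl
  | succ b hab ih =>
      exact (ih (by omega)).trans (Nat.choose_le_succ_of_lt_half_left (by omega))

set_option maxHeartbeats 1000000 in
theorem stmt_16 (n i : ℕ) (he : Even n) (hi1 : 6 ≤ i) (hi2 : i ≤ n / 2) :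
    ((i : ℝ) - 3) * (n.choose i : ℝ) / (n.choose (i / 2) : ℝ) >
      (n : ℝ) * ((n : ℝ) - 1) / ((n : ℝ) + 2) := by
  set j := i / 2 with hj
  have h2j : 2 * j ≤ i ∧ i ≤ 2 * j + 1 := by omega
  have hj3 : 3 ≤ j := by omega
  have h2i : 2 * i ≤ n := by omega
  have e1 : n.choose (j + 1) * (j + 1) = n.choose j * (n - j) :=
    Nat.choose_succ_right_eq n j
  have e2 : n.choose (j + 2) * (j + 2) = n.choose (j + 1) * (n - (j + 1)) :=
    Nat.choose_succ_right_eq n (j + 1)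
  have hmono : n.choose (j + 2) ≤ n.choose i := choose_mono_half n (by omega) hi2
  have hcj : 0 < n.choose j := Nat.choose_pos (by omega)
  have hjn : j ≤ n := by omega
  have hj1n : j + 1 ≤ n := by omega
  have E1 : (n.choose (j + 1) : ℝ) * (j + 1) = (n.choose j : ℝ) * ((n : ℝ) - j) := by
    have := congrArg (Nat.cast : ℕ → ℝ) e1
    push_cast [Nat.cast_sub hjn] at this
    linarith [this]
  have E2 : (n.choose (j + 2) : ℝ) * (j + 2) = (n.choose (j + 1) : ℝ) * ((n : ℝ) - j - 1) := by
    have := congrArg (Nat.cast : ℕ → ℝ) e2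
    push_cast [Nat.cast_sub hj1n] at this
    linarith [this]
  have Hmono : (n.choose (j + 2) : ℝ) ≤ (n.choose i : ℝ) := by exact_mod_cast hmono
  have Cj : (0 : ℝ) < (n.choose j : ℝ) := by exact_mod_cast hcj
  have rn : (12 : ℝ) ≤ n := by exact_mod_cast (by omega : 12 ≤ n)
  have ri : (6 : ℝ) ≤ i := by exact_mod_cast hi1
  have rji : (2 : ℝ) * j ≤ i := by exact_mod_cast h2j.1
  have rj3 : (3 : ℝ) ≤ j := by exact_mod_cast hj3
  have rin : (2 : ℝ) * i ≤ n := by exact_mod_cast h2i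
  -- the key polynomial inequality
  obtain ⟨a, ha, hA⟩ : ∃ a : ℝ, 0 ≤ a ∧ (j : ℝ) = a + 3 := ⟨(j : ℝ) - 3, by linarith, by ring⟩
  obtain ⟨b, hb, hB⟩ : ∃ b : ℝ, 0 ≤ b ∧ (n : ℝ) = 4 * a + 12 + b :=
    ⟨(n : ℝ) - 4 * (j : ℝ), by linarith, by rw [hA]; ring⟩
  have key2 : (2 * (j : ℝ) - 3) * (((n : ℝ) - j) * ((n : ℝ) - j - 1)) * ((n : ℝ) + 2) -
      (n : ℝ) * ((n : ℝ) - 1) * (((j : ℝ) + 1) * ((j : ℝ) + 2)) =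
      384 + 470*b^1 + 73*b^2 + 3*b^3 + 1994*a^1 + 862*a^1*b^1 + 83*a^1*b^2 + 2*a^1*b^3
        + 1714*a^2 + 410*a^2*b^1 + 19*a^2*b^2 + 532*a^3 + 58*a^3*b^1 + 56*a^4 := by
    rw [hA, hB]; ring
  have hpos : (0 : ℝ) < 384 + 470*b^1 + 73*b^2 + 3*b^3 + 1994*a^1 + 862*a^1*b^1 + 83*a^1*b^2
      + 2*a^1*b^3 + 1714*a^2 + 410*a^2*b^1 + 19*a^2*b^2 + 532*a^3 + 58*a^3*b^1 + 56*a^4 := by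
    positivity
  have key3 : (2 * (j : ℝ) - 3) * (((n : ℝ) - j) * ((n : ℝ) - j - 1)) * ((n : ℝ) + 2) >
      (n : ℝ) * ((n : ℝ) - 1) * (((j : ℝ) + 1) * ((j : ℝ) + 2)) := by linarith [key2, hpos]
  have hP : (0 : ℝ) ≤ (((n : ℝ) - j) * ((n : ℝ) - j - 1)) * ((n : ℝ) + 2) := by
    have h1 : (0 : ℝ) ≤ (n : ℝ) - j := by linarith
    have h2 : (0 : ℝ) ≤ (n : ℝ) - j - 1 := by linarith
    have h3 : (0 : ℝ) ≤ (n : ℝ) + 2 := by linarith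
    positivity
  have key : ((i : ℝ) - 3) * (((n : ℝ) - j) * ((n : ℝ) - j - 1)) * ((n : ℝ) + 2) >
      (n : ℝ) * ((n : ℝ) - 1) * (((j : ℝ) + 1) * ((j : ℝ) + 2)) := by
    have hd : (0 : ℝ) ≤ ((i : ℝ) - 2 * (j : ℝ)) *
        ((((n : ℝ) - j) * ((n : ℝ) - j - 1)) * ((n : ℝ) + 2)) :=
      mul_nonneg (by linarith) hP
    have expand : ((i : ℝ) - 3) * (((n : ℝ) - j) * ((n : ℝ) - j - 1)) * ((n : ℝ) + 2) =
        (2 * (j : ℝ) - 3) * (((n : ℝ) - j) * ((n : ℝ) - j - 1)) * ((n : ℝ) + 2) +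
        ((i : ℝ) - 2 * (j : ℝ)) * ((((n : ℝ) - j) * ((n : ℝ) - j - 1)) * ((n : ℝ) + 2)) := by
      ring
    rw [expand]
    linarith [key3, hd]
  -- combine with binomial facts
  have hjpos : (0 : ℝ) < ((j : ℝ) + 1) * ((j : ℝ) + 2) := by positivity
  have hchoose : (n.choose j : ℝ) * (((n : ℝ) - j) * ((n : ℝ) - j - 1)) ≤
      (n.choose i : ℝ) * (((j : ℝ) + 1) * ((j : ℝ) + 2)) := by
    calc (n.choose j : ℝ) * (((n : ℝ) - j) * ((n : ℝ) - j - 1))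
        = ((n.choose j : ℝ) * ((n : ℝ) - j)) * ((n : ℝ) - j - 1) := by ring
      _ = ((n.choose (j + 1) : ℝ) * (j + 1)) * ((n : ℝ) - j - 1) := by rw [E1]
      _ = ((n.choose (j + 1) : ℝ) * ((n : ℝ) - j - 1)) * (j + 1) := by ring
      _ = ((n.choose (j + 2) : ℝ) * (j + 2)) * (j + 1) := by rw [E2]
      _ = (n.choose (j + 2) : ℝ) * (((j : ℝ) + 1) * ((j : ℝ) + 2)) := by ring
      _ ≤ (n.choose i : ℝ) * (((j : ℝ) + 1) * ((j : ℝ) + 2)) :=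
          mul_le_mul_of_nonneg_right Hmono (le_of_lt hjpos)
  have hn2 : (0 : ℝ) < (n : ℝ) + 2 := by linarith
  rw [gt_iff_lt, div_lt_div_iff₀ hn2 Cj]
  have hi3 : (0 : ℝ) ≤ (i : ℝ) - 3 := by linarith
  have s1 := mul_le_mul_of_nonneg_left hchoose (mul_nonneg hi3 hn2.le)
  have s2 := mul_lt_mul_of_pos_right key Cj
  rw [← mul_lt_mul_iff_of_pos_right hjpos]
  nlinarith [s1, s2]
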